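/- Let f = a_0 + a_1 z + ... + a_n z^n ∈ ℤ[z] be a primitive polynomial of degree n with a_0·a_n ≠ 0. Suppose there exists a positive integer m with m ≥ h_f + 2 such that |s_n(m)| = |a_n| = p_1^{k_1}···p_r^{k_r}, where p_1,…,p_r are primes which are pairwise distinct if r ≥ 2 and k_1,…,k_r are positive integers. Suppose that for each i = 1,…,r there exists a positive integer j_i ≤ n such that: (i) v_{p_i}(s_{n−j_i}(m)) = 0 and gcd(k_i, j_i) = 1; (ii) if j_i > 1, then k_i/j_i < v_{p_i}(s_{n−t}(m))/(j_i − t) for each t = 1,…,j_i − 1; and (iii) |s_0(m)|/q ≤ |s_n(m)|, where q is the smallest prime divisor of |s_0(m)| = |f(m)|. Then f is a product of at most r irreducible polynomials in ℤ[z]; in particular, if r = 1, then f is irreducible in ℤ[z]. -/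

import Mathlib

/-- The height `h_f = max_{0 ≤ i ≤ n-1} |a_i|/|a_n|` of a polynomial
`f = a_0 + a_1 z + ⋯ + a_n z^n` of degree `n`. -/
noncomputable def height (f : Polynomial ℤ) : ℝ :=
  ⨆ i : Fin f.natDegree, (|f.coeff i| : ℝ) / |f.coeff f.natDegree|


open Polynomial

-- valuation helper
lemma vhelp (p : ℕ) (hp : p.Prime) (c : ℕ) (x : ℤ) (hx : x ≠ 0) :
    (p:ℤ)^c ∣ x ↔ c ≤ x.natAbs.factorization p := by
  rw [show ((p:ℤ)^c) = ((p^c : ℕ) : ℤ) by push_cast; ring]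
  rw [Int.natCast_dvd]
  exact (Nat.Prime.pow_dvd_iff_le_factorization hp (Int.natAbs_ne_zero.mpr hx))

lemma vmul (p : ℕ) (x y : ℤ) (hx : x ≠ 0) (hy : y ≠ 0) :
    ((x*y).natAbs).factorization p = x.natAbs.factorization p + y.natAbs.factorization p := by
  rw [Int.natAbs_mul, Nat.factorization_mul (Int.natAbs_ne_zero.mpr hx) (Int.natAbs_ne_zero.mpr hy)]
  rfl

lemma vzero (p : ℕ) (hp : p.Prime) (x : ℤ) (hnd : ¬ (p:ℤ) ∣ x) :
    x.natAbs.factorization p = 0 ∧ x ≠ 0 := by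
  have hx : x ≠ 0 := by rintro rfl; exact hnd (dvd_zero _)
  refine ⟨?_, hx⟩
  by_contra h
  exact hnd (by simpa using (vhelp p hp 1 x hx).mpr (Nat.one_le_iff_ne_zero.mpr h))

lemma fact_eq (r : ℕ) (p k : ℕ → ℕ) (hp : ∀ i < r, Nat.Prime (p i))
    (hpdist : ∀ i < r, ∀ i' < r, i ≠ i' → p i ≠ p i') (i : ℕ) (hi : i < r) :
    (∏ l ∈ Finset.range r, p l ^ k l).factorization (p i) = k i := by
  rw [Nat.factorization_prod (fun l hl => pow_ne_zero _ (hp l (Finset.mem_range.mp hl)).pos.ne')]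
  rw [Finset.sum_apply']
  rw [Finset.sum_eq_single i]
  · rw [(hp i hi).factorization_pow, Finsupp.single_eq_same]
  · intro l hl hne
    rw [(hp l (Finset.mem_range.mp hl)).factorization_pow, Finsupp.single_eq_of_ne']
    exact hpdist l (Finset.mem_range.mp hl) i hi hne
  · intro h; exact absurd (Finset.mem_range.mpr hi) h

lemma taylor_lc (m : ℤ) (g : Polynomial ℤ) :
    (taylor m g).leadingCoeff = g.leadingCoeff := by
  by_cases hg : g = 0
  · simp [hg]
  by_cases hg0 : g.natDegree = 0
  · obtain ⟨c, rfl⟩ := natDegree_eq_zero.mp hg0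
    simp only [← Polynomial.C_eq_intCast, taylor_C]
  rw [taylor_apply, leadingCoeff_comp (by rw [natDegree_X_add_C]; norm_num), leadingCoeff_X_add_C, one_pow, mul_one]

lemma taylor_ne_zero' (m : ℤ) (g : Polynomial ℤ) (hg : g ≠ 0) : taylor m g ≠ 0 := by
  intro h
  have := taylor_lc m g
  rw [h] at this
  exact hg (leadingCoeff_eq_zero.mp (by simpa using this.symm))

lemma exists_coeff_not_dvd (g : Polynomial ℤ) (hg : g.IsPrimitive) (p : ℕ) (hp : p.Prime)
    (m : ℤ) : ∃ d, ¬ (p:ℤ) ∣ (taylor m g).coeff d := by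
  by_contra h
  push_neg at h
  have hC : C (p:ℤ) ∣ taylor m g := (C_dvd_iff_dvd_coeff _ _).mpr h
  have hg' : g = (taylor m g).comp (X - C m) := by
    rw [taylor_apply, comp_assoc]
    simp
  have hCg : C (p:ℤ) ∣ g := by
    obtain ⟨w, hw⟩ := hC
    rw [hg', hw, mul_comp, C_comp]
    exact Dvd.intro _ rfl
  have := hg _ hCg
  rw [Int.isUnit_iff] at this
  have := hp.two_le
  omega

lemma arith_final (j k α β u w : ℕ) (hk : 0 < k) (hj : 0 < j) (hα : 1 ≤ α) (hβ : 1 ≤ β)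
    (habk : α + β = k) (h1 : j*α ≤ k*u) (h2 : j*β ≤ k*w) (h3 : u + w ≤ j)
    (hgcd : Nat.gcd k j = 1) : False := by
  have e0 : j*α + j*β = j*k := by rw [← Nat.mul_add, habk]
  have e1 : j*k ≤ k*u + k*w := by omega
  have e2 : k*u + k*w = k*(u+w) := by ring
  have e3 : k*(u+w) ≤ k*j := Nat.mul_le_mul_left k h3
  have e4 : k*j = j*k := by ring
  have e5 : k*(u+w) = k*j := by omega
  have huwj : u + w = j := Nat.eq_of_mul_eq_mul_left hk e5
  have e6 : j*α = k*u ∧ j*β = k*w := by omega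
  have hjdvdu : j ∣ k * u := ⟨α, e6.1.symm⟩
  have hco : Nat.Coprime j k := Nat.coprime_comm.mp hgcd
  have hju : j ∣ u := hco.dvd_of_dvd_mul_left hjdvdu
  have hu1 : 1 ≤ u := by
    rcases Nat.eq_zero_or_pos u with h | h
    · subst h
      simp at e6
      omega
    · exact h
  have hw1 : 1 ≤ w := by
    rcases Nat.eq_zero_or_pos w with h | h
    · subst h
      simp at e6
      omega
    · exact h
  have := Nat.le_of_dvd (by omega) hju
  omega

lemma newton_key (p k j : ℕ) (hp : p.Prime) (hk : 0 < k) (hjpos : 0 < j)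
    (P Q : Polynomial ℤ) (hP : P ≠ 0) (hQ : Q ≠ 0)
    (hPprim : ∃ d, ¬ (p:ℤ) ∣ P.coeff d)
    (hQprim : ∃ d, ¬ (p:ℤ) ∣ Q.coeff d)
    (hjn : j ≤ P.natDegree + Q.natDegree)
    (hFk : ((P*Q).coeff (P.natDegree + Q.natDegree)).natAbs.factorization p = k)
    (hF2 : ¬ (p:ℤ) ∣ (P*Q).coeff (P.natDegree + Q.natDegree - j))
    (hF3 : ∀ t, 1 ≤ t → t < j → (P*Q).coeff (P.natDegree + Q.natDegree - t) = 0 ∨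
        k*(j-t) < j * (((P*Q).coeff (P.natDegree + Q.natDegree - t)).natAbs.factorization p))
    (hgcd : Nat.gcd k j = 1)
    (hlcP : (p:ℤ) ∣ P.leadingCoeff) (hlcQ : (p:ℤ) ∣ Q.leadingCoeff) : False := by
  classical
  set a := P.natDegree with ha
  set b := Q.natDegree with hb
  set DP : Finset ℕ := (Finset.range (a+1)).filter (fun d => P.coeff d ≠ 0) with hDP
  set DQ : Finset ℕ := (Finset.range (b+1)).filter (fun d => Q.coeff d ≠ 0) with hDQ
  have hPlc : P.coeff a ≠ 0 := fun h => hP (leadingCoeff_eq_zero.mp h)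
  have hQlc : Q.coeff b ≠ 0 := fun h => hQ (leadingCoeff_eq_zero.mp h)
  have memDP : ∀ d, P.coeff d ≠ 0 → d ∈ DP := fun d hd =>
    Finset.mem_filter.mpr ⟨Finset.mem_range.mpr (Nat.lt_succ_of_le (le_natDegree_of_ne_zero hd)), hd⟩
  have memDQ : ∀ d, Q.coeff d ≠ 0 → d ∈ DQ := fun d hd =>
    Finset.mem_filter.mpr ⟨Finset.mem_range.mpr (Nat.lt_succ_of_le (le_natDegree_of_ne_zero hd)), hd⟩
  have boundDP : ∀ d ∈ DP, d ≤ a ∧ P.coeff d ≠ 0 := fun d hd =>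
    ⟨Nat.lt_succ_iff.mp (Finset.mem_range.mp (Finset.mem_filter.mp hd).1), (Finset.mem_filter.mp hd).2⟩
  have boundDQ : ∀ d ∈ DQ, d ≤ b ∧ Q.coeff d ≠ 0 := fun d hd =>
    ⟨Nat.lt_succ_iff.mp (Finset.mem_range.mp (Finset.mem_filter.mp hd).1), (Finset.mem_filter.mp hd).2⟩
  have haDP : a ∈ DP := memDP a hPlc
  have hbDQ : b ∈ DQ := memDQ b hQlc
  have hDPne : DP.Nonempty := ⟨a, haDP⟩
  have hDQne : DQ.Nonempty := ⟨b, hbDQ⟩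
  set ΦP : ℕ → ℕ := fun d => j * (P.coeff d).natAbs.factorization p + k * (a - d) with hΦP
  set ΦQ : ℕ → ℕ := fun d => j * (Q.coeff d).natAbs.factorization p + k * (b - d) with hΦQ
  set WP : ℕ := DP.inf' hDPne ΦP with hWP
  set WQ : ℕ := DQ.inf' hDQne ΦQ with hWQ
  have hWPle : ∀ d ∈ DP, WP ≤ ΦP d := fun d hd => Finset.inf'_le _ hd
  have hWQle : ∀ d ∈ DQ, WQ ≤ ΦQ d := fun d hd => Finset.inf'_le _ hd
  set AP : Finset ℕ := DP.filter (fun d => ΦP d = WP) with hAP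
  set AQ : Finset ℕ := DQ.filter (fun d => ΦQ d = WQ) with hAQ
  have hAPne : AP.Nonempty := by
    obtain ⟨d, hd, hval⟩ := Finset.exists_mem_eq_inf' hDPne ΦP
    exact ⟨d, Finset.mem_filter.mpr ⟨hd, hval.symm⟩⟩
  have hAQne : AQ.Nonempty := by
    obtain ⟨d, hd, hval⟩ := Finset.exists_mem_eq_inf' hDQne ΦQ
    exact ⟨d, Finset.mem_filter.mpr ⟨hd, hval.symm⟩⟩
  set d1 : ℕ := AP.max' hAPne with hd1
  set d2 : ℕ := AQ.max' hAQne with hd2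
  have hd1AP : d1 ∈ AP := AP.max'_mem hAPne
  have hd2AQ : d2 ∈ AQ := AQ.max'_mem hAQne
  have hd1DP : d1 ∈ DP := (Finset.mem_filter.mp hd1AP).1
  have hd2DQ : d2 ∈ DQ := (Finset.mem_filter.mp hd2AQ).1
  have hd1W : ΦP d1 = WP := (Finset.mem_filter.mp hd1AP).2
  have hd2W : ΦQ d2 = WQ := (Finset.mem_filter.mp hd2AQ).2
  have hd1a : d1 ≤ a := (boundDP d1 hd1DP).1
  have hd2b : d2 ≤ b := (boundDQ d2 hd2DQ).1
  have hd1c : P.coeff d1 ≠ 0 := (boundDP d1 hd1DP).2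
  have hd2c : Q.coeff d2 ≠ 0 := (boundDQ d2 hd2DQ).2
  have hstrictP : ∀ d ∈ DP, d1 < d → WP + 1 ≤ ΦP d := by
    intro d hd hlt
    rcases Nat.lt_or_ge (ΦP d) (WP + 1) with h | h
    · have h1 : ΦP d = WP := le_antisymm (by omega) (hWPle d hd)
      have h2 : d ∈ AP := Finset.mem_filter.mpr ⟨hd, h1⟩
      have := AP.le_max' d h2
      omega
    · exact h
  have hstrictQ : ∀ d ∈ DQ, d2 < d → WQ + 1 ≤ ΦQ d := by
    intro d hd hlt
    rcases Nat.lt_or_ge (ΦQ d) (WQ + 1) with h | h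
    · have h1 : ΦQ d = WQ := le_antisymm (by omega) (hWQle d hd)
      have h2 : d ∈ AQ := Finset.mem_filter.mpr ⟨hd, h1⟩
      have := AQ.le_max' d h2
      omega
    · exact h
  set α := (P.coeff a).natAbs.factorization p with hα
  set β := (Q.coeff b).natAbs.factorization p with hβ
  have hlcP' : (p:ℤ) ∣ P.coeff a := hlcP
  have hlcQ' : (p:ℤ) ∣ Q.coeff b := hlcQ
  have hα1 : 1 ≤ α := (vhelp p hp 1 _ hPlc).mp (by simpa using hlcP')
  have hβ1 : 1 ≤ β := (vhelp p hp 1 _ hQlc).mp (by simpa using hlcQ')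
  have htop : (P*Q).coeff (a+b) = P.coeff a * Q.coeff b := coeff_mul_degree_add_degree P Q
  have habk : α + β = k := by
    have h1 := vmul p (P.coeff a) (Q.coeff b) hPlc hQlc
    rw [← htop] at h1
    have h2 : ((P*Q).coeff (a+b)).natAbs.factorization p = k := hFk
    rw [h2] at h1
    exact h1.symm
  set c := (P.coeff d1).natAbs.factorization p + (Q.coeff d2).natAbs.factorization p with hc
  have hΦPval : ∀ d, ΦP d = j * (P.coeff d).natAbs.factorization p + k * (a - d) := fun d => rfl
  have hΦQval : ∀ d, ΦQ d = j * (Q.coeff d).natAbs.factorization p + k * (b - d) := fun d => rfl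
  have hcoeffmul : (P*Q).coeff (d1+d2) =
      ∑ x ∈ Finset.HasAntidiagonal.antidiagonal (d1+d2), P.coeff x.1 * Q.coeff x.2 := coeff_mul P Q (d1+d2)
  have hAdvd : ∀ x ∈ Finset.HasAntidiagonal.antidiagonal (d1+d2), (p:ℤ)^c ∣ P.coeff x.1 * Q.coeff x.2 := by
    rintro ⟨e, e'⟩ hx
    rw [Finset.HasAntidiagonal.mem_antidiagonal] at hx
    simp only at hx ⊢
    by_cases h1 : P.coeff e = 0
    · simp [h1]
    by_cases h2 : Q.coeff e' = 0
    · simp [h2]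
    have he := memDP e h1
    have he' := memDQ e' h2
    have hea := (boundDP e he).1
    have heb := (boundDQ e' he').1
    have k1 : ΦP d1 ≤ ΦP e := hd1W ▸ hWPle e he
    have k2 : ΦQ d2 ≤ ΦQ e' := hd2W ▸ hWQle e' he'
    rw [hΦPval, hΦPval] at k1
    rw [hΦQval, hΦQval] at k2
    have e1 : k * (a - e) + k * (b - e') = k * (a - d1) + k * (b - d2) := by
      rw [← Nat.mul_add, ← Nat.mul_add]
      congr 1
      omega
    have hsum : j * c ≤ j * ((P.coeff e).natAbs.factorization p + (Q.coeff e').natAbs.factorization p) := by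
      rw [hc, Nat.mul_add, Nat.mul_add]
      omega
    have hvc : c ≤ (P.coeff e).natAbs.factorization p + (Q.coeff e').natAbs.factorization p := Nat.le_of_mul_le_mul_left hsum hjpos
    rw [vhelp p hp c _ (mul_ne_zero h1 h2), vmul p _ _ h1 h2]
    exact hvc
  have hAstrict : ∀ x ∈ Finset.HasAntidiagonal.antidiagonal (d1+d2), x ≠ (d1, d2) →
      (p:ℤ)^(c+1) ∣ P.coeff x.1 * Q.coeff x.2 := by
    rintro ⟨e, e'⟩ hx hne
    rw [Finset.HasAntidiagonal.mem_antidiagonal] at hx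
    simp only at hx ⊢
    by_cases h1 : P.coeff e = 0
    · simp [h1]
    by_cases h2 : Q.coeff e' = 0
    · simp [h2]
    have he := memDP e h1
    have he' := memDQ e' h2
    have hea := (boundDP e he).1
    have heb := (boundDQ e' he').1
    have hed : e ≠ d1 := by
      intro hcon
      apply hne
      have : e' = d2 := by omega
      rw [hcon, this]
    have e1 : k * (a - e) + k * (b - e') = k * (a - d1) + k * (b - d2) := by
      rw [← Nat.mul_add, ← Nat.mul_add]
      congr 1
      omega
    have hsum : j * c + 1 ≤ j * ((P.coeff e).natAbs.factorization p + (Q.coeff e').natAbs.factorization p) := by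
      rcases Nat.lt_or_ge d1 e with hlt | hge
      · have k1 : WP + 1 ≤ ΦP e := hstrictP e he hlt
        have k2 : ΦQ d2 ≤ ΦQ e' := hd2W ▸ hWQle e' he'
        rw [← hd1W] at k1
        rw [hΦPval, hΦPval] at k1
        rw [hΦQval, hΦQval] at k2
        rw [hc, Nat.mul_add, Nat.mul_add]
        omega
      · have hlt : d2 < e' := by omega
        have k2 : WQ + 1 ≤ ΦQ e' := hstrictQ e' he' hlt
        have k1 : ΦP d1 ≤ ΦP e := hd1W ▸ hWPle e he
        rw [← hd2W] at k2
        rw [hΦPval, hΦPval] at k1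
        rw [hΦQval, hΦQval] at k2
        rw [hc, Nat.mul_add, Nat.mul_add]
        omega
    have hvc : c + 1 ≤ (P.coeff e).natAbs.factorization p + (Q.coeff e').natAbs.factorization p := by
      by_contra hcon
      push_neg at hcon
      have h3 : (P.coeff e).natAbs.factorization p + (Q.coeff e').natAbs.factorization p ≤ c := by omega
      have h4 : j * ((P.coeff e).natAbs.factorization p + (Q.coeff e').natAbs.factorization p) ≤ j * c := Nat.mul_le_mul_left j h3
      omega
    rw [vhelp p hp (c+1) _ (mul_ne_zero h1 h2), vmul p _ _ h1 h2]
    exact hvc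
  have hmainv : (P.coeff d1 * Q.coeff d2).natAbs.factorization p = c := vmul p _ _ hd1c hd2c
  have hmainnd : ¬ (p:ℤ)^(c+1) ∣ P.coeff d1 * Q.coeff d2 := by
    rw [vhelp p hp (c+1) _ (mul_ne_zero hd1c hd2c)]
    omega
  have hmem : ((d1, d2) : ℕ × ℕ) ∈ Finset.HasAntidiagonal.antidiagonal (d1+d2) :=
    Finset.HasAntidiagonal.mem_antidiagonal.mpr rfl
  have hFsplit : (P*Q).coeff (d1+d2) = P.coeff d1 * Q.coeff d2 +
      ∑ x ∈ (Finset.HasAntidiagonal.antidiagonal (d1+d2)).erase (d1,d2), P.coeff x.1 * Q.coeff x.2 := by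
    rw [hcoeffmul, ← Finset.add_sum_erase _ _ hmem]
  have hrest : (p:ℤ)^(c+1) ∣ ∑ x ∈ (Finset.HasAntidiagonal.antidiagonal (d1+d2)).erase (d1,d2),
      P.coeff x.1 * Q.coeff x.2 :=
    Finset.dvd_sum fun x hx => hAstrict x (Finset.mem_of_mem_erase hx) (Finset.ne_of_mem_erase hx)
  have hFc1 : ¬ (p:ℤ)^(c+1) ∣ (P*Q).coeff (d1+d2) := by
    rw [hFsplit]
    intro hdvd
    apply hmainnd
    have := dvd_sub hdvd hrest
    simpa using this
  have hFcne : (P*Q).coeff (d1+d2) ≠ 0 := fun h0 => hFc1 (h0 ▸ dvd_zero _)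
  have hFcdvd : (p:ℤ)^c ∣ (P*Q).coeff (d1+d2) := hcoeffmul ▸ Finset.dvd_sum hAdvd
  have hFcv : ((P*Q).coeff (d1+d2)).natAbs.factorization p = c := by
    have h1 : c ≤ ((P*Q).coeff (d1+d2)).natAbs.factorization p := (vhelp p hp c _ hFcne).mp hFcdvd
    have h2 : ¬ (c+1 ≤ ((P*Q).coeff (d1+d2)).natAbs.factorization p) := fun h => hFc1 ((vhelp p hp (c+1) _ hFcne).mpr h)
    omega
  have hsle : d1 + d2 ≤ a + b := by omega
  -- step B
  have hB : j * k ≤ j * ((P*Q).coeff (d1+d2)).natAbs.factorization p + k * ((a+b) - (d1+d2)) := by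
    rcases Nat.eq_zero_or_pos ((a+b) - (d1+d2)) with ht0 | htpos
    · have hsn : d1 + d2 = a + b := by omega
      rw [hsn, hFk, Nat.sub_self, Nat.mul_zero, Nat.add_zero]
    · set t := (a+b) - (d1+d2) with hts
      rcases Nat.lt_or_ge t j with htj | htj
      · have h5 := hF3 t htpos htj
        have hform : a + b - t = d1 + d2 := by omega
        rw [hform] at h5
        rcases h5 with h0 | hlt
        · exact absurd h0 hFcne
        · have e1 : k * (j-t) + k * t = k * j := by rw [← Nat.mul_add]; congr 1; omega
          have e2 : k * j = j * k := by ring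
          omega
      · have h6 : k * j ≤ k * t := Nat.mul_le_mul_left k htj
        have e2 : k * j = j * k := by ring
        omega
  have hWsum : j * k ≤ WP + WQ := by
    have e1 : j * ((P*Q).coeff (d1+d2)).natAbs.factorization p + k * ((a+b) - (d1+d2)) = ΦP d1 + ΦQ d2 := by
      rw [hΦPval, hΦQval, hFcv, hc]
      have e2 : k * ((a+b) - (d1+d2)) = k * (a - d1) + k * (b - d2) := by
        rw [← Nat.mul_add]
        congr 1
        omega
      rw [Nat.mul_add]
      omega
    rw [hd1W, hd2W] at e1
    omega
  have hWPa : WP ≤ j * α := by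
    have h7 := hWPle a haDP
    rw [hΦPval] at h7
    have : a - a = 0 := by omega
    rw [this, Nat.mul_zero, Nat.add_zero] at h7
    exact h7
  have hWQb : WQ ≤ j * β := by
    have h7 := hWQle b hbDQ
    rw [hΦQval] at h7
    have : b - b = 0 := by omega
    rw [this, Nat.mul_zero, Nat.add_zero] at h7
    exact h7
  have hsum2 : j * α + j * β = j * k := by rw [← Nat.mul_add, habk]
  have hWPeq : WP = j * α := by omega
  have hWQeq : WQ = j * β := by omega
  -- zero valuation positions
  set ZP : Finset ℕ := DP.filter (fun d => ¬ (p:ℤ) ∣ P.coeff d) with hZP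
  set ZQ : Finset ℕ := DQ.filter (fun d => ¬ (p:ℤ) ∣ Q.coeff d) with hZQ
  have hZPne : ZP.Nonempty := by
    obtain ⟨d, hd⟩ := hPprim
    exact ⟨d, Finset.mem_filter.mpr ⟨memDP d (vzero p hp _ hd).2, hd⟩⟩
  have hZQne : ZQ.Nonempty := by
    obtain ⟨d, hd⟩ := hQprim
    exact ⟨d, Finset.mem_filter.mpr ⟨memDQ d (vzero p hp _ hd).2, hd⟩⟩
  set z1 := ZP.max' hZPne with hz1
  set z2 := ZQ.max' hZQne with hz2
  have hz1m : z1 ∈ ZP := ZP.max'_mem hZPne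
  have hz2m : z2 ∈ ZQ := ZQ.max'_mem hZQne
  have hz1a : z1 ≤ a := (boundDP z1 (Finset.mem_filter.mp hz1m).1).1
  have hz2b : z2 ≤ b := (boundDQ z2 (Finset.mem_filter.mp hz2m).1).1
  have hz1v : (P.coeff z1).natAbs.factorization p = 0 := (vzero p hp _ (Finset.mem_filter.mp hz1m).2).1
  have hz2v : (Q.coeff z2).natAbs.factorization p = 0 := (vzero p hp _ (Finset.mem_filter.mp hz2m).2).1
  have hu1 : j * α ≤ k * (a - z1) := by
    have h8 := hWPle z1 (Finset.mem_filter.mp hz1m).1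
    rw [hΦPval, hz1v, Nat.mul_zero, Nat.zero_add] at h8
    omega
  have hu2 : j * β ≤ k * (b - z2) := by
    have h8 := hWQle z2 (Finset.mem_filter.mp hz2m).1
    rw [hΦQval, hz2v, Nat.mul_zero, Nat.zero_add] at h8
    omega
  have hC : (a+b) - j ≤ z1 + z2 := by
    have hcoeffnj : (P*Q).coeff ((a+b) - j) =
        ∑ x ∈ Finset.HasAntidiagonal.antidiagonal ((a+b)-j), P.coeff x.1 * Q.coeff x.2 := coeff_mul P Q _
    by_contra hcon
    push_neg at hcon
    apply hF2
    show (p:ℤ) ∣ (P*Q).coeff ((a+b) - j)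
    rw [hcoeffnj]
    apply Finset.dvd_sum
    rintro ⟨e, e'⟩ hx
    rw [Finset.HasAntidiagonal.mem_antidiagonal] at hx
    simp only at hx ⊢
    by_cases h1 : P.coeff e = 0
    · simp [h1]
    by_cases h2 : Q.coeff e' = 0
    · simp [h2]
    rcases Classical.em ((p:ℤ) ∣ P.coeff e) with hd | hd
    · exact Dvd.dvd.mul_right hd _
    rcases Classical.em ((p:ℤ) ∣ Q.coeff e') with hd' | hd'
    · exact Dvd.dvd.mul_left hd' _
    exfalso
    have he : e ∈ ZP := Finset.mem_filter.mpr ⟨memDP e h1, hd⟩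
    have he' : e' ∈ ZQ := Finset.mem_filter.mpr ⟨memDQ e' h2, hd'⟩
    have l1 := ZP.le_max' e he
    have l2 := ZQ.le_max' e' he'
    omega
  have huw : (a - z1) + (b - z2) ≤ j := by omega
  exact arith_final j k α β (a - z1) (b - z2) hk hjpos hα1 hβ1 habk hu1 hu2 huw hgcd

lemma castabs (z : ℤ) : ((|z| : ℤ) : ℝ) = |(z : ℝ)| := by push_cast; ring

lemma root_bound (f : Polynomial ℤ) (hn : 0 < f.natDegree)
    (han : f.coeff f.natDegree ≠ 0) (ha0 : f.coeff 0 ≠ 0)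
    (m : ℕ) (hmh : height f + 2 ≤ (m : ℝ)) :
    ∀ α : ℂ, (Polynomial.map (Int.castRingHom ℂ) f).eval α = 0 → ‖α‖ < (m:ℝ) - 1 := by
  intro α hα
  set n := f.natDegree with hndef
  have hanR : (0:ℝ) < |(f.coeff n : ℝ)| := by
    simp only [abs_pos]
    exact_mod_cast han
  have hbdd : BddAbove (Set.range fun i : Fin n => (|f.coeff i| : ℝ) / |f.coeff n|) :=
    (Set.finite_range _).bddAbove
  have hheight_ge : ∀ i : Fin n, (|f.coeff i| : ℝ) / |f.coeff n| ≤ height f := by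
    intro i
    exact le_ciSup hbdd i
  have hd : ((|f.coeff n| : ℤ) : ℝ) = |(f.coeff n : ℝ)| := castabs _
  have hcoeffbd : ∀ i : Fin n, |((f.coeff i : ℤ) : ℝ)| ≤ ((m:ℝ) - 2) * |(f.coeff n : ℝ)| := by
    intro i
    have h1 := hheight_ge i
    have h2 : (|f.coeff (i:ℕ)| : ℝ) / |f.coeff n| ≤ (m:ℝ) - 2 := by linarith
    rw [hd] at h2
    exact (div_le_iff₀ hanR).mp h2
  have hh0 : 0 < height f := by
    have h0 := hheight_ge ⟨0, hn⟩
    have h1 : (0:ℝ) < (|f.coeff ((⟨0, hn⟩ : Fin n) : ℕ)| : ℝ) / |f.coeff n| := by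
      apply div_pos
      · show (0:ℝ) < |((f.coeff 0 : ℤ) : ℝ)|
        simp only [abs_pos]
        exact_mod_cast ha0
      · rw [hd]; exact hanR
    linarith
  have hm3 : (3:ℝ) ≤ (m:ℝ) := by
    have h1 : (2:ℝ) < (m:ℝ) := by linarith
    have h2 : (2:ℕ) < m := by exact_mod_cast h1
    exact_mod_cast h2
  set x := ‖α‖ with hx
  rcases le_or_gt x 1 with hx1 | hx1
  · linarith
  have heval : ∑ i ∈ Finset.range (n+1), (f.coeff i : ℂ) * α ^ i = 0 := by
    have h6 : (Polynomial.map (Int.castRingHom ℂ) f).natDegree < n + 1 :=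
      lt_of_le_of_lt natDegree_map_le (Nat.lt_succ_self n)
    rw [← hα, eval_eq_sum_range' h6]
    apply Finset.sum_congr rfl
    intro i _
    rw [coeff_map]
    rfl
  have hsplit : (f.coeff n : ℂ) * α ^ n = -∑ i ∈ Finset.range n, (f.coeff i : ℂ) * α ^ i := by
    have h := Finset.sum_range_succ (fun i => (f.coeff i : ℂ) * α ^ i) n
    rw [h] at heval
    linear_combination heval
  set S : ℝ := ∑ i ∈ Finset.range n, x ^ i with hS
  have habs : |(f.coeff n : ℝ)| * x ^ n ≤ ((m:ℝ) - 2) * |(f.coeff n : ℝ)| * S := by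
    have h7 : ‖(f.coeff n : ℂ) * α ^ n‖ = |(f.coeff n : ℝ)| * x ^ n := by
      rw [norm_mul, norm_pow]
      congr 1
      rw [Complex.norm_intCast]
    have h8 : ‖∑ i ∈ Finset.range n, (f.coeff i : ℂ) * α ^ i‖ ≤
        ∑ i ∈ Finset.range n, ((m:ℝ) - 2) * |(f.coeff n : ℝ)| * x ^ i := by
      refine le_trans (norm_sum_le _ _) ?_
      apply Finset.sum_le_sum
      intro i hi
      rw [norm_mul, norm_pow]
      apply mul_le_mul_of_nonneg_right _ (pow_nonneg (norm_nonneg α) i)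
      rw [Complex.norm_intCast]
      exact hcoeffbd ⟨i, Finset.mem_range.mp hi⟩
    calc |(f.coeff n : ℝ)| * x ^ n = ‖(f.coeff n : ℂ) * α ^ n‖ := h7.symm
      _ = ‖-∑ i ∈ Finset.range n, (f.coeff i : ℂ) * α ^ i‖ := by rw [hsplit]
      _ = ‖∑ i ∈ Finset.range n, (f.coeff i : ℂ) * α ^ i‖ := norm_neg _
      _ ≤ ∑ i ∈ Finset.range n, ((m:ℝ) - 2) * |(f.coeff n : ℝ)| * x ^ i := h8
      _ = ((m:ℝ) - 2) * |(f.coeff n : ℝ)| * S := by rw [hS, Finset.mul_sum]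
  have hgeom' : (x - 1) * S = x ^ n - 1 := by
    rw [hS, geom_sum_eq (by linarith) n]
    rw [mul_comm, div_mul_cancel₀ _ (by linarith : x - 1 ≠ 0)]
  by_contra hcon
  push_neg at hcon
  have hx1' : (0:ℝ) < x - 1 := by linarith
  have hxn1 : (1:ℝ) ≤ x ^ n := one_le_pow₀ (le_of_lt hx1)
  have hmx : (m:ℝ) - 2 ≤ x - 1 := by linarith
  have h := mul_le_mul_of_nonneg_right habs (le_of_lt hx1')
  have heq : ((m:ℝ) - 2) * |(f.coeff n : ℝ)| * S * (x - 1) = ((m:ℝ)-2) * (|(f.coeff n : ℝ)| * (x^n - 1)) := by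
    rw [show ((m:ℝ) - 2) * |(f.coeff n : ℝ)| * S * (x - 1) = ((m:ℝ)-2) * |(f.coeff n : ℝ)| * ((x-1) * S) from by ring, hgeom']
    ring
  rw [heq] at h
  have e1 : (0:ℝ) ≤ ((x-1) - ((m:ℝ)-2)) * (|(f.coeff n : ℝ)| * (x^n-1)) :=
    mul_nonneg (by linarith) (mul_nonneg hanR.le (by linarith))
  nlinarith [mul_pos hanR hx1']

lemma eval_gt (g : Polynomial ℤ) (hg0 : 0 < g.natDegree) (M : ℤ)
    (hroot : ∀ α : ℂ, (Polynomial.map (Int.castRingHom ℂ) g).eval α = 0 →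
      1 < ‖(M:ℂ) - α‖) :
    g.leadingCoeff.natAbs + 1 ≤ (g.eval M).natAbs := by
  have hgne : g ≠ 0 := fun h => by simp [h] at hg0
  have hinj : Function.Injective (Int.castRingHom ℂ) := Int.cast_injective
  set gC := Polynomial.map (Int.castRingHom ℂ) g with hgC
  have hgCne : gC ≠ 0 := by
    rw [hgC, Ne, Polynomial.map_eq_zero_iff hinj]
    exact hgne
  have hsplits : Splits gC := IsAlgClosed.splits gC
  have heval : gC.eval (M:ℂ) = gC.leadingCoeff * (gC.roots.map fun a => (M:ℂ) - a).prod :=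
    hsplits.eval_eq_prod_roots (M:ℂ)
  have hlc : gC.leadingCoeff = (g.leadingCoeff : ℂ) := leadingCoeff_map_of_injective hinj g
  have hevalC : gC.eval (M:ℂ) = ((g.eval M : ℤ) : ℂ) := by
    rw [hgC, eval_map]
    exact (eval₂_at_apply (Int.castRingHom ℂ) M).trans rfl
  -- roots nonempty
  have hcard : gC.roots.card = g.natDegree := by
    have h1 := (splits_iff_card_roots).mp hsplits
    rw [h1, hgC, natDegree_map_eq_of_injective hinj]
  have hrne : gC.roots ≠ 0 := by
    intro h
    rw [h] at hcard
    simp at hcard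
    omega
  obtain ⟨γ, hγ⟩ := Multiset.exists_mem_of_ne_zero hrne
  obtain ⟨rest, hrest⟩ := Multiset.exists_cons_of_mem hγ
  -- take abs
  have habs : ‖gC.eval (M:ℂ)‖ =
      ‖gC.leadingCoeff‖ * ((gC.roots.map fun a => (M:ℂ) - a).map (‖·‖)).prod := by
    rw [heval, norm_mul]
    congr 1
    exact map_multiset_prod (normHom : ℂ →*₀ ℝ) _
  have hrgt : ∀ a ∈ gC.roots, 1 < ‖(M:ℂ) - a‖ := by
    intro a hha
    apply hroot
    exact (mem_roots'.mp hha).2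
  have hprodgt : 1 < ((gC.roots.map fun a => (M:ℂ) - a).map (‖·‖)).prod := by
    rw [hrest]
    simp only [Multiset.map_cons, Multiset.prod_cons]
    have h2 : (1:ℝ) ≤ ((rest.map fun a => (M:ℂ) - a).map (‖·‖)).prod := by
      apply Multiset.one_le_prod
      intro y hy
      rw [Multiset.map_map, Multiset.mem_map] at hy
      obtain ⟨w, hw, rfl⟩ := hy
      exact le_of_lt (hrgt w (by rw [hrest]; exact Multiset.mem_cons_of_mem hw))
    have h3 : 1 < ‖(M:ℂ) - γ‖ := hrgt γ hγ
    nlinarith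
  have hlcabs : ‖gC.leadingCoeff‖ = (g.leadingCoeff.natAbs : ℝ) := by
    rw [hlc, Complex.norm_intCast, Nat.cast_natAbs, Int.cast_abs]
  have hevalabs : ‖gC.eval (M:ℂ)‖ = ((g.eval M).natAbs : ℝ) := by
    rw [hevalC, Complex.norm_intCast, Nat.cast_natAbs, Int.cast_abs]
  have hfinal : (g.leadingCoeff.natAbs : ℝ) < ((g.eval M).natAbs : ℝ) := by
    rw [← hlcabs, ← hevalabs, habs]
    have hlcpos : 0 < ‖gC.leadingCoeff‖ := by
      rw [hlcabs]
      have : g.leadingCoeff.natAbs ≠ 0 := Int.natAbs_ne_zero.mpr (leadingCoeff_ne_zero.mpr hgne)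
      positivity
    nth_rewrite 1 [← mul_one ‖gC.leadingCoeff‖]
    exact mul_lt_mul_of_pos_left hprodgt hlcpos
  have := (Nat.cast_lt (α := ℝ)).mp hfinal
  omega

lemma countP_le_sum {α : Type*} (s : Multiset α) (r : ℕ) (Q : α → Prop) (pred : ℕ → α → Prop)
    [DecidablePred Q] [∀ i, DecidablePred (pred i)]
    (h : ∀ g ∈ s, Q g → ∃ i, i < r ∧ pred i g) :
    s.countP Q ≤ ∑ i ∈ Finset.range r, s.countP (pred i) := by
  induction s using Multiset.induction_on with
  | empty => simp
  | cons a s ih =>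
    have ih' := ih (fun g hg hQ => h g (Multiset.mem_cons_of_mem hg) hQ)
    by_cases hQa : Q a
    · obtain ⟨i0, hi0, hpi0⟩ := h a (Multiset.mem_cons_self a s) hQa
      rw [Multiset.countP_cons_of_pos _ hQa]
      have h2 : ∑ i ∈ Finset.range r, s.countP (pred i) + 1 ≤
          ∑ i ∈ Finset.range r, (a ::ₘ s).countP (pred i) := by
        have h3 : ∀ i ∈ Finset.range r, s.countP (pred i) +
            (if i = i0 then 1 else 0) ≤ (a ::ₘ s).countP (pred i) := by
          intro i _
          by_cases hii : i = i0
          · subst hii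
            rw [Multiset.countP_cons_of_pos _ hpi0]
            simp
          · simp only [hii, if_false, add_zero, Multiset.countP_cons]
            omega
        calc ∑ i ∈ Finset.range r, s.countP (pred i) + 1
            = ∑ i ∈ Finset.range r, (s.countP (pred i) + (if i = i0 then 1 else 0)) := by
              rw [Finset.sum_add_distrib, Finset.sum_ite_eq' (Finset.range r) i0 (fun _ => 1)]
              simp [Finset.mem_range.mpr hi0]
          _ ≤ ∑ i ∈ Finset.range r, (a ::ₘ s).countP (pred i) := Finset.sum_le_sum h3
      omega
    · rw [Multiset.countP_cons_of_neg _ hQa]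
      refine le_trans ih' (Finset.sum_le_sum ?_)
      intro i _
      rw [Multiset.countP_cons]
      omega

theorem part1
    (f : Polynomial ℤ) (n : ℕ) (hdeg : f.natDegree = n)
    (ha : f.coeff 0 * f.coeff n ≠ 0) (hprim : f.IsPrimitive)
    (m : ℕ) (hm : 0 < m)
    (r : ℕ) (hr : 0 < r)
    (p k j : ℕ → ℕ)
    (hp : ∀ i < r, Nat.Prime (p i))
    (hk : ∀ i < r, 0 < k i)
    (hpdist : ∀ i < r, ∀ i' < r, i ≠ i' → p i ≠ p i')
    (hsn : (f.coeff n).natAbs = ∏ i ∈ Finset.range r, p i ^ k i)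
    (hj : ∀ i < r, 0 < j i ∧ j i ≤ n)
    (hcond1 : ∀ i < r,
      ¬ ((p i : ℤ) ∣ (Polynomial.hasseDeriv (n - j i) f).eval (m : ℤ)) ∧
      Nat.gcd (k i) (j i) = 1)
    (hcond2 : ∀ i < r, 1 < j i → ∀ t, 1 ≤ t → t ≤ j i - 1 →
      (Polynomial.hasseDeriv (n - t) f).eval (m : ℤ) = 0 ∨
      (k i : ℚ) / (j i : ℚ) <
        (padicValInt (p i) ((Polynomial.hasseDeriv (n - t) f).eval (m : ℤ)) : ℚ) /
          ((j i : ℚ) - (t : ℚ)))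
    -- factorization data
    (cu : ℤ) (hcuU : IsUnit cu) (gs : Multiset (Polynomial ℤ))
    (hirr : ∀ g ∈ gs, Irreducible g)
    (hfeq : f = Polynomial.C cu * gs.prod) :
    ∀ i < r, gs.countP (fun g => (p i:ℤ) ∣ g.leadingCoeff) ≤ 1 := by
  classical
  have hn0 : 0 < n := lt_of_lt_of_le (hj 0 hr).1 (hj 0 hr).2
  have hcn : f.coeff n ≠ 0 := fun h => ha (by rw [h, mul_zero])
  have hfne : f ≠ 0 := fun h => hcn (by rw [h]; simp)
  have hgdvd : ∀ g ∈ gs, g ∣ f := by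
    intro g hg
    refine (Multiset.dvd_prod hg).trans ?_
    rw [hfeq]
    exact Dvd.intro_left _ rfl
  have hgprim : ∀ g ∈ gs, g.IsPrimitive := by
    intro g hg c hc
    exact hprim c (hc.trans (hgdvd g hg))
  have hgne : ∀ g ∈ gs, g ≠ 0 := fun g hg => (hirr g hg).ne_zero
  -- main claim
  intro i hi
  by_contra hcon
  push_neg at hcon
  have h2 : 2 ≤ gs.countP (fun g => (p i:ℤ) ∣ g.leadingCoeff) := hcon
  rw [Multiset.countP_eq_card_filter] at h2
  set fil := gs.filter (fun g => (p i:ℤ) ∣ g.leadingCoeff) with hfil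
  have hane : fil ≠ 0 := by
    intro h
    rw [h] at h2
    simp at h2
  obtain ⟨A, hA⟩ := Multiset.exists_mem_of_ne_zero hane
  have hAfil := hA
  have herase_card : 1 ≤ Multiset.card (fil.erase A) := by
    have hce := Multiset.card_erase_of_mem hA
    rw [Nat.pred_eq_sub_one] at hce
    omega
  have hbne : fil.erase A ≠ 0 := by
    intro h
    rw [h] at herase_card
    simp at herase_card
  obtain ⟨B, hB⟩ := Multiset.exists_mem_of_ne_zero hbne
  have hBfil : B ∈ fil := Multiset.mem_of_mem_erase hB
  have hAgs : A ∈ gs := Multiset.mem_of_mem_filter hA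
  have hBgs' : B ∈ gs.erase A := by
    have hle : fil.erase A ≤ gs.erase A := Multiset.erase_le_erase A (Multiset.filter_le _ gs)
    exact Multiset.mem_of_le hle hB
  have hpA : (p i:ℤ) ∣ A.leadingCoeff := (Multiset.mem_filter.mp hA).2
  have hpB : (p i:ℤ) ∣ B.leadingCoeff := (Multiset.mem_filter.mp hBfil).2
  set rest := (gs.erase A).erase B with hrest
  have hgs2 : gs = A ::ₘ B ::ₘ rest := by
    rw [hrest, Multiset.cons_erase hBgs', Multiset.cons_erase hAgs]
  -- the cofactor
  set Bc := Polynomial.C cu * (B * rest.prod) with hBc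
  have hfAB : f = A * Bc := by
    rw [hfeq, hgs2, Multiset.prod_cons, Multiset.prod_cons, hBc]
    ring
  have hBne : Bc ≠ 0 := by
    rw [hBc]
    apply mul_ne_zero (fun h => hcuU.ne_zero (by simpa using h))
    apply mul_ne_zero (hgne B (Multiset.mem_of_mem_erase hBgs'))
    apply Multiset.prod_ne_zero
    intro h0
    exact hgne 0 (by rw [hgs2]; exact Multiset.mem_cons_of_mem (Multiset.mem_cons_of_mem h0)) rfl
  have hAne : A ≠ 0 := hgne A hAgs
  have hBcprim : Bc.IsPrimitive := by
    intro cc hcc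
    apply hprim cc
    rw [hfAB]
    exact hcc.trans (Dvd.intro_left _ rfl)
  have hAprim : A.IsPrimitive := hgprim A hAgs
  -- taylor
  set P := taylor (m:ℤ) A with hP
  set Q := taylor (m:ℤ) Bc with hQ
  have hPQ : P * Q = taylor (m:ℤ) f := by
    rw [hP, hQ, ← taylor_mul, ← hfAB]
  have hPne : P ≠ 0 := taylor_ne_zero' _ _ hAne
  have hQne : Q ≠ 0 := taylor_ne_zero' _ _ hBne
  have hndsum : P.natDegree + Q.natDegree = n := by
    have h1 : (P * Q).natDegree = P.natDegree + Q.natDegree := natDegree_mul hPne hQne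
    rw [hPQ, natDegree_taylor, hdeg] at h1
    exact h1.symm
  have hcoeffT : ∀ s, (P*Q).coeff s = (Polynomial.hasseDeriv s f).eval (m:ℤ) := by
    intro s
    rw [hPQ]
    exact taylor_coeff (m:ℤ) f s
  have htcn : (P*Q).coeff n = f.coeff n := by
    rw [hPQ]
    have h1 : (taylor (m:ℤ) f).coeff n =
        (taylor (m:ℤ) f).coeff ((taylor (m:ℤ) f).natDegree) := by
      rw [natDegree_taylor, hdeg]
    rw [h1]
    have h2 : (taylor (m:ℤ) f).coeff ((taylor (m:ℤ) f).natDegree) =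
        (taylor (m:ℤ) f).leadingCoeff := rfl
    rw [h2, taylor_lc]
    rw [leadingCoeff, hdeg]
  -- rational to nat conversion for hF3
  have hF3' : ∀ t, 1 ≤ t → t < j i → (P*Q).coeff (P.natDegree + Q.natDegree - t) = 0 ∨
      k i * (j i - t) < j i * (((P*Q).coeff (P.natDegree + Q.natDegree - t)).natAbs.factorization (p i)) := by
    intro t ht1 htj
    rw [hndsum, hcoeffT]
    have hji2 : 1 < j i := by omega
    have := hcond2 i hi hji2 t ht1 (by omega)
    rcases this with h0 | hlt
    · exact Or.inl h0
    right
    set V := padicValInt (p i) ((Polynomial.hasseDeriv (n - t) f).eval (m:ℤ)) with hV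
    have hVe : (((Polynomial.hasseDeriv (n - t) f).eval (m:ℤ)).natAbs.factorization (p i)) = V := by
      rw [hV, padicValInt, Nat.factorization_def _ (hp i hi)]
    rw [hVe]
    have hjt : ((j i : ℚ) - (t:ℚ)) = ((j i - t : ℕ) : ℚ) := by
      have : (t:ℚ) ≤ (j i : ℚ) := by exact_mod_cast le_of_lt htj
      push_cast [Nat.cast_sub (le_of_lt htj)]
      ring
    rw [hjt] at hlt
    have hjpos : (0:ℚ) < (j i : ℚ) := by exact_mod_cast (hj i hi).1
    have hjtpos : (0:ℚ) < ((j i - t : ℕ) : ℚ) := by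
      have : 0 < j i - t := by omega
      exact_mod_cast this
    rw [div_lt_div_iff₀ hjpos hjtpos] at hlt
    have : (k i : ℚ) * ((j i - t : ℕ):ℚ) < (V:ℚ) * (j i : ℚ) := hlt
    have h9 : ((k i * (j i - t) : ℕ) : ℚ) < ((j i * V : ℕ) : ℚ) := by push_cast; linarith
    exact_mod_cast h9
  -- apply newton_key
  exact newton_key (p i) (k i) (j i) (hp i hi) (hk i hi) (hj i hi).1 P Q hPne hQne
    (exists_coeff_not_dvd A hAprim (p i) (hp i hi) (m:ℤ))
    (exists_coeff_not_dvd Bc hBcprim (p i) (hp i hi) (m:ℤ))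
    (by rw [hndsum]; exact (hj i hi).2)
    (by rw [hndsum, htcn, hsn]; exact fact_eq r p k hp hpdist i hi)
    (by rw [hndsum, hcoeffT]; exact (hcond1 i hi).1)
    hF3'
    (hcond1 i hi).2
    (by rw [hP, taylor_lc]; exact hpA)
    (by
      rw [hQ, taylor_lc, hBc]
      have h1 : Bc.leadingCoeff = cu * (B.leadingCoeff * rest.prod.leadingCoeff) := by
        rw [hBc, leadingCoeff_mul, leadingCoeff_mul, leadingCoeff_C]
      rw [← hBc, h1]
      exact Dvd.dvd.mul_left (Dvd.dvd.mul_right hpB _) _)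

theorem part2
    (f : Polynomial ℤ) (n : ℕ) (hdeg : f.natDegree = n) (hn0 : 0 < n)
    (hcn : f.coeff n ≠ 0) (hc0 : f.coeff 0 ≠ 0)
    (m : ℕ) (hm : 0 < m) (hmh : height f + 2 ≤ (m : ℝ))
    (r : ℕ) (hr : 0 < r)
    (p k : ℕ → ℕ)
    (hp : ∀ i < r, Nat.Prime (p i))
    (hsn : (f.coeff n).natAbs = ∏ i ∈ Finset.range r, p i ^ k i)
    (q : ℕ) (hq : Nat.Prime q)
    (hqmin : ∀ q', Nat.Prime q' → q' ∣ (f.eval (m : ℤ)).natAbs → q ≤ q')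
    (hcond3 : ((f.eval (m : ℤ)).natAbs : ℚ) / (q : ℚ) ≤ ((f.coeff n).natAbs : ℚ))
    (cu : ℤ) (hcuU : IsUnit cu) (gs : Multiset (Polynomial ℤ))
    (hirr : ∀ g ∈ gs, Irreducible g)
    (hdegpos : ∀ g ∈ gs, 0 < g.natDegree)
    (hfeq : f = Polynomial.C cu * gs.prod)
    (hcount1 : ∀ i < r, gs.countP (fun g => (p i:ℤ) ∣ g.leadingCoeff) ≤ 1) :
    Multiset.card gs ≤ r := by
  classical
  set M : ℤ := (m:ℤ) with hM
  have hgne : ∀ g ∈ gs, g ≠ 0 := fun g hg => (hirr g hg).ne_zero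
  have hgdvd : ∀ g ∈ gs, g ∣ f := by
    intro g hg
    refine (Multiset.dvd_prod hg).trans ?_
    rw [hfeq]
    exact Dvd.intro_left _ rfl
  set ε : Polynomial ℤ → ℕ := fun g => (g.eval M).natAbs with hε
  set L : Polynomial ℤ → ℕ := fun g => g.leadingCoeff.natAbs with hL
  set An : ℕ := (f.coeff n).natAbs with hAn
  have hAn1 : 1 ≤ An := by
    rw [hAn]
    exact Nat.one_le_iff_ne_zero.mpr (Int.natAbs_ne_zero.mpr hcn)
  have hq2 : 2 ≤ q := hq.two_le
  have hcuabs : cu.natAbs = 1 := Int.isUnit_iff.mp hcuU |>.elim (fun h => by rw [h]; rfl)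
    (fun h => by rw [h]; rfl)
  -- total value product
  have htot : (f.eval M).natAbs = ((gs.map ε).prod) := by
    rw [hfeq, eval_mul, eval_C, Int.natAbs_mul, hcuabs, one_mul, eval_multiset_prod]
    have h1 : ((gs.map (eval M)).prod).natAbs = ((gs.map (eval M)).map Int.natAbs).prod := by
      exact (map_multiset_prod Int.natAbsHom _)
    rw [h1, Multiset.map_map]
    rfl
  -- leading coefficient product
  have hlcprod : An = ((gs.map L).prod) := by
    have h1 : f.leadingCoeff = cu * (gs.map leadingCoeff).prod := by
      rw [hfeq, leadingCoeff_mul, leadingCoeff_C, leadingCoeff_multiset_prod]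
    have h2 : f.leadingCoeff = f.coeff n := by rw [leadingCoeff, hdeg]
    rw [hAn, ← h2, h1, Int.natAbs_mul, hcuabs, one_mul]
    rw [show ((gs.map leadingCoeff).prod).natAbs = ((gs.map leadingCoeff).map Int.natAbs).prod
      from map_multiset_prod Int.natAbsHom _, Multiset.map_map]
    rfl
  -- root facts
  have hroot : ∀ g ∈ gs, ∀ α : ℂ, (Polynomial.map (Int.castRingHom ℂ) g).eval α = 0 →
      1 < ‖(M:ℂ) - α‖ := by
    intro g hg α hα
    have hdvdC : (Polynomial.map (Int.castRingHom ℂ) g) ∣ (Polynomial.map (Int.castRingHom ℂ) f) :=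
      Polynomial.map_dvd _ (hgdvd g hg)
    obtain ⟨w, hw⟩ := hdvdC
    have hfα : (Polynomial.map (Int.castRingHom ℂ) f).eval α = 0 := by
      rw [hw, eval_mul, hα, zero_mul]
    have hb := root_bound f (hdeg ▸ hn0) (hdeg ▸ hcn) hc0 m hmh α hfα
    have h1 : ‖((M:ℂ))‖ = (m:ℝ) := by
      rw [hM]
      push_cast
      exact Complex.norm_natCast m
    have h2 : (m:ℝ) - ‖α‖ ≤ ‖(M:ℂ) - α‖ := by
      rw [← h1]
      exact (norm_sub_norm_le _ _)
    linarith
  have hεL : ∀ g ∈ gs, L g + 1 ≤ ε g :=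
    fun g hg => eval_gt g (hdegpos g hg) M (hroot g hg)
  have hL1 : ∀ g ∈ gs, 1 ≤ L g := by
    intro g hg
    exact Nat.one_le_iff_ne_zero.mpr (Int.natAbs_ne_zero.mpr (leadingCoeff_ne_zero.mpr (hgne g hg)))
  have hεq : ∀ g ∈ gs, q ≤ ε g := by
    intro g hg
    have h2 : 2 ≤ ε g := le_trans (by have := hL1 g hg; omega) (hεL g hg)
    have hdvd : ε g ∣ (f.eval M).natAbs := by
      rw [hε]
      exact Int.natAbs_dvd_natAbs.mpr (eval_dvd (hgdvd g hg))
    have hpf : Nat.Prime ((ε g).minFac) := Nat.minFac_prime (by omega)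
    have := hqmin _ hpf ((Nat.minFac_dvd _).trans hdvd)
    exact le_trans this (Nat.minFac_le (by omega))
  -- hcond3 as nat
  have hF4 : (f.eval M).natAbs ≤ q * An := by
    have hq0 : (0:ℚ) < (q:ℚ) := by exact_mod_cast hq.pos
    have := (div_le_iff₀ hq0).mp hcond3
    have h9 : ((f.eval M).natAbs : ℚ) ≤ ((An * q : ℕ) : ℚ) := by push_cast; linarith
    have h10 := (Nat.cast_le (α := ℚ)).mp h9
    calc (f.eval M).natAbs ≤ An * q := h10
      _ = q * An := Nat.mul_comm _ _
  -- Q predicate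
  set Qp : Polynomial ℤ → Prop := fun g => ∃ i, i < r ∧ (p i:ℤ) ∣ g.leadingCoeff with hQp
  have hNQ : gs.countP Qp ≤ r := by
    have h1 := countP_le_sum gs r Qp (fun i g => (p i:ℤ) ∣ g.leadingCoeff)
      (fun g _ hQ => hQ)
    refine le_trans h1 ?_
    calc ∑ i ∈ Finset.range r, gs.countP (fun g => (p i:ℤ) ∣ g.leadingCoeff)
        ≤ ∑ _i ∈ Finset.range r, 1 :=
          Finset.sum_le_sum (fun i hi => hcount1 i (Finset.mem_range.mp hi))
      _ = r := by simp
  by_contra hcon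
  push_neg at hcon
  -- split
  set gsQ := gs.filter Qp with hgsQ
  set gsN := gs.filter (fun g => ¬ Qp g) with hgsN
  have hsplitgs : gsQ + gsN = gs := Multiset.filter_add_not Qp gs
  have hcardQ : Multiset.card gsQ ≤ r := by
    rw [hgsQ, ← Multiset.countP_eq_card_filter]
    exact hNQ
  have hcards : Multiset.card gsQ + Multiset.card gsN = Multiset.card gs := by
    rw [← hsplitgs, Multiset.card_add]
  have hs0 : 1 ≤ Multiset.card gsN := by omega
  -- L g = 1 on gsN
  have hLN1 : ∀ g ∈ gsN, L g = 1 := by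
    intro g hg
    have hgmem : g ∈ gs := Multiset.mem_of_mem_filter hg
    have hnQ : ¬ Qp g := (Multiset.mem_filter.mp hg).2
    by_contra hne1
    have h1 : 2 ≤ L g := by have := hL1 g hgmem; omega
    set q' := (L g).minFac with hq'
    have hq'p : Nat.Prime q' := Nat.minFac_prime (by omega)
    have hdvd1 : L g ∣ An := by
      rw [hL, hAn]
      apply Int.natAbs_dvd_natAbs.mpr
      have h2 : g.leadingCoeff ∣ f.leadingCoeff := by
        rw [hfeq, leadingCoeff_mul]
        exact Dvd.dvd.mul_left (by
          rw [leadingCoeff_multiset_prod]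
          exact Multiset.dvd_prod (Multiset.mem_map_of_mem _ hgmem)) _
      have h2' : f.leadingCoeff = f.coeff n := by rw [leadingCoeff, hdeg]
      rw [h2'] at h2
      exact h2
    have hdvd2 : q' ∣ ∏ i ∈ Finset.range r, p i ^ k i := by
      rw [← hsn]
      exact (Nat.minFac_dvd _).trans hdvd1
    obtain ⟨i, hi, hdvd3⟩ := hq'p.prime.exists_mem_finset_dvd hdvd2
    have hqp : q' = p i := by
      have h6 := hq'p.dvd_of_dvd_pow hdvd3
      exact (Nat.prime_dvd_prime_iff_eq hq'p (hp i (Finset.mem_range.mp hi))).mp h6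
    apply hnQ
    refine ⟨i, Finset.mem_range.mp hi, ?_⟩
    rw [← hqp]
    have h4 : (q' : ℤ) ∣ (L g : ℤ) := Int.natCast_dvd_natCast.mpr (Nat.minFac_dvd _)
    have h5 : ((L g : ℕ) : ℤ) ∣ g.leadingCoeff := by
      rw [hL]
      exact Int.natAbs_dvd.mpr dvd_rfl
    exact h4.trans h5
  have hprodLN : (gsN.map L).prod = 1 :=
    Multiset.prod_eq_one (by
      intro x hx
      obtain ⟨g, hg, rfl⟩ := Multiset.mem_map.mp hx
      exact hLN1 g hg)
  have hprodLQ : (gsQ.map L).prod = An := by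
    have h1 : ((gsQ + gsN).map L).prod = An := by rw [hsplitgs, ← hlcprod]
    rw [Multiset.map_add, Multiset.prod_add, hprodLN, mul_one] at h1
    exact h1
  -- lower bounds on products
  have hmemQ : ∀ g ∈ gsQ, g ∈ gs := fun g hg => Multiset.mem_of_mem_filter hg
  have hmemN : ∀ g ∈ gsN, g ∈ gs := fun g hg => Multiset.mem_of_mem_filter hg
  have hprodN_ge : q ^ (Multiset.card gsN) ≤ (gsN.map ε).prod := by
    calc q ^ (Multiset.card gsN) = ((gsN.map (fun _ => q)).prod) := by
          rw [Multiset.map_const', Multiset.prod_replicate]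
      _ ≤ (gsN.map ε).prod := by
          apply Multiset.prod_map_le_prod_map₀
          · intro g _; exact Nat.zero_le _
          · intro g hg; exact hεq g (hmemN g hg)
  have hprodQ_ge : An + 1 ≤ (gsQ.map ε).prod ∨ (gsQ = 0 ∧ An = 1) := by
    rcases Multiset.empty_or_exists_mem gsQ with h0 | ⟨g1, hg1⟩
    · right
      refine ⟨h0, ?_⟩
      rw [← hprodLQ, h0]
      simp
    left
    obtain ⟨tQ, htQ⟩ := Multiset.exists_cons_of_mem hg1
    have htQ_mem : ∀ g ∈ tQ, g ∈ gs := by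
      intro g hg
      exact hmemQ g (by rw [htQ]; exact Multiset.mem_cons_of_mem hg)
    have h1 : (tQ.map L).prod ≤ (tQ.map ε).prod := by
      apply Multiset.prod_map_le_prod_map₀
      · intro g _; exact Nat.zero_le _
      · intro g hg; exact le_trans (by omega) (hεL g (htQ_mem g hg))
    have h2 : L g1 * (tQ.map L).prod = An := by
      rw [← hprodLQ, htQ, Multiset.map_cons, Multiset.prod_cons]
    have h3 : (L g1 + 1) * (tQ.map L).prod ≤ (gsQ.map ε).prod := by
      rw [htQ, Multiset.map_cons, Multiset.prod_cons]
      exact Nat.mul_le_mul (hεL g1 (hmemQ g1 hg1)) h1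
    have h4 : 1 ≤ (tQ.map L).prod := by
      apply Multiset.one_le_prod
      intro x hx
      obtain ⟨g, hg, rfl⟩ := Multiset.mem_map.mp hx
      exact hL1 g (htQ_mem g hg)
    have h5 : (L g1 + 1) * (tQ.map L).prod = An + (tQ.map L).prod := by
      rw [Nat.add_mul, one_mul, h2]
    omega
  -- combine
  have htotsplit : (f.eval M).natAbs = (gsQ.map ε).prod * (gsN.map ε).prod := by
    rw [htot, ← hsplitgs, Multiset.map_add, Multiset.prod_add]
  have hfinal : q * An < (f.eval M).natAbs := by
    rcases hprodQ_ge with hQ1 | ⟨hQ0, hAn1'⟩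
    · have h6 : q ^ 1 ≤ q ^ (Multiset.card gsN) := Nat.pow_le_pow_right (by omega) hs0
      have h7 : q ≤ (gsN.map ε).prod := le_trans (by rwa [pow_one] at h6) hprodN_ge
      calc q * An < (An + 1) * q := by nlinarith
        _ ≤ (gsQ.map ε).prod * (gsN.map ε).prod := Nat.mul_le_mul hQ1 h7
        _ = (f.eval M).natAbs := htotsplit.symm
    · have hcard2 : 2 ≤ Multiset.card gsN := by
        rw [hQ0] at hcards
        simp at hcards
        omega
      have h6 : q ^ 2 ≤ q ^ (Multiset.card gsN) := Nat.pow_le_pow_right (by omega) hcard2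
      have h7 : q * q ≤ (gsN.map ε).prod := by
        rw [← pow_two]
        exact le_trans h6 hprodN_ge
      have h8 : 1 ≤ (gsQ.map ε).prod := by
        rw [hQ0]
        simp
      calc q * An = q := by rw [hAn1', mul_one]
        _ < q * q := by nlinarith
        _ ≤ (gsQ.map ε).prod * (gsN.map ε).prod := by
            calc q * q ≤ (gsN.map ε).prod := h7
              _ ≤ (gsQ.map ε).prod * (gsN.map ε).prod := Nat.le_mul_of_pos_left _ (by omega)
        _ = (f.eval M).natAbs := htotsplit.symm
  omega

theorem glue
    (f : Polynomial ℤ) (n : ℕ) (hdeg : f.natDegree = n) (hn0 : 0 < n)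
    (hprim : f.IsPrimitive) (hcn : f.coeff n ≠ 0) :
    ∃ (cu : ℤ) (hcuU : IsUnit cu) (gs : Multiset (Polynomial ℤ)),
      (∀ g ∈ gs, Irreducible g) ∧ (∀ g ∈ gs, 0 < g.natDegree) ∧
      f = Polynomial.C cu * gs.prod := by
  have hfne : f ≠ 0 := fun h => hcn (by rw [h]; simp)
  obtain ⟨gs, hirr, hassoc⟩ := WfDvdMonoid.exists_factors f hfne
  obtain ⟨un, hun⟩ := hassoc
  obtain ⟨cu, hcuU, hcuC⟩ := Polynomial.isUnit_iff.mp un.isUnit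
  refine ⟨cu, hcuU, gs, hirr, ?_, ?_⟩
  · intro g hg
    by_contra hd
    push_neg at hd
    have hd0 : g.natDegree = 0 := by omega
    obtain ⟨c0, hc0⟩ := natDegree_eq_zero.mp hd0
    have hgdvd : g ∣ f := by
      refine (Multiset.dvd_prod hg).trans ?_
      exact Dvd.intro _ hun
    have hunit : IsUnit c0 := hprim c0 (by rw [hc0]; exact hgdvd)
    exact (hirr g hg).not_isUnit (by rw [← hc0]; exact hunit.map Polynomial.C)
  · rw [← hun, ← hcuC]
    ring
theorem packify (f : Polynomial ℤ) (r : ℕ) (hr : 0 < r) (n : ℕ) (hdeg : f.natDegree = n) (hn0 : 0 < n)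
    (cu : ℤ) (hcuU : IsUnit cu) (gs : Multiset (Polynomial ℤ))
    (hirr : ∀ g ∈ gs, Irreducible g) (hdegpos : ∀ g ∈ gs, 0 < g.natDegree)
    (hfeq : f = Polynomial.C cu * gs.prod) (hcard : Multiset.card gs ≤ r) :
    (∃ (N : ℕ) (u : ℤˣ) (gs : Multiset (Polynomial ℤ)),
      N ≤ r ∧ Multiset.card gs = N ∧
      (∀ g ∈ gs, 0 < g.natDegree ∧ Irreducible g) ∧
      f = Polynomial.C (u : ℤ) * gs.prod) ∧
    (r = 1 → Irreducible f) := by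
  constructor
  · exact ⟨Multiset.card gs, hcuU.unit, gs, hcard, rfl,
      fun g hg => ⟨hdegpos g hg, hirr g hg⟩, by rw [hfeq]; congr⟩
  · intro hr1
    subst hr1
    have hcard1 : Multiset.card gs = 1 := by
      rcases Nat.lt_or_ge (Multiset.card gs) 1 with h | h
      · exfalso
        have h0 : gs = 0 := Multiset.card_eq_zero.mp (by omega)
        rw [h0] at hfeq
        simp at hfeq
        have : f.natDegree = 0 := by rw [hfeq]; exact natDegree_C cu
        omega
      · omega
    obtain ⟨g, hg⟩ := Multiset.card_eq_one.mp hcard1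
    have hgirr : Irreducible g := hirr g (by rw [hg]; exact Multiset.mem_singleton_self g)
    have hassoc : Associated g f := by
      refine ⟨(hcuU.map Polynomial.C).unit, ?_⟩
      rw [hfeq, hg]
      simp [IsUnit.unit_spec]
      ring
    exact hassoc.irreducible hgirr

set_option maxHeartbeats 1000000 in
/-- Theorem 2. -/
theorem statement1
    (f : Polynomial ℤ) (n : ℕ) (hdeg : f.natDegree = n)
    (ha : f.coeff 0 * f.coeff n ≠ 0) (hprim : f.IsPrimitive)
    (m : ℕ) (hm : 0 < m) (hmh : height f + 2 ≤ (m : ℝ))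
    (r : ℕ) (hr : 0 < r)
    (p k j : ℕ → ℕ)
    (hp : ∀ i < r, Nat.Prime (p i))
    (hk : ∀ i < r, 0 < k i)
    (hpdist : ∀ i < r, ∀ i' < r, i ≠ i' → p i ≠ p i')
    (hsn : (f.coeff n).natAbs = ∏ i ∈ Finset.range r, p i ^ k i)
    (hj : ∀ i < r, 0 < j i ∧ j i ≤ n)
    (hcond1 : ∀ i < r,
      ¬ ((p i : ℤ) ∣ (Polynomial.hasseDeriv (n - j i) f).eval (m : ℤ)) ∧
      Nat.gcd (k i) (j i) = 1)
    (hcond2 : ∀ i < r, 1 < j i → ∀ t, 1 ≤ t → t ≤ j i - 1 →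
      (Polynomial.hasseDeriv (n - t) f).eval (m : ℤ) = 0 ∨
      (k i : ℚ) / (j i : ℚ) <
        (padicValInt (p i) ((Polynomial.hasseDeriv (n - t) f).eval (m : ℤ)) : ℚ) /
          ((j i : ℚ) - (t : ℚ)))
    (q : ℕ) (hq : Nat.Prime q) (hqdvd : q ∣ (f.eval (m : ℤ)).natAbs)
    (hqmin : ∀ q', Nat.Prime q' → q' ∣ (f.eval (m : ℤ)).natAbs → q ≤ q')
    (hcond3 : ((f.eval (m : ℤ)).natAbs : ℚ) / (q : ℚ) ≤ ((f.coeff n).natAbs : ℚ)) :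
    (∃ (N : ℕ) (u : ℤˣ) (gs : Multiset (Polynomial ℤ)),
      N ≤ r ∧ Multiset.card gs = N ∧
      (∀ g ∈ gs, 0 < g.natDegree ∧ Irreducible g) ∧
      f = Polynomial.C (u : ℤ) * gs.prod) ∧
    (r = 1 → Irreducible f) := by
  have hn0 : 0 < n := lt_of_lt_of_le (hj 0 hr).1 (hj 0 hr).2
  have hcn : f.coeff n ≠ 0 := fun h => ha (by rw [h, mul_zero])
  have hc0 : f.coeff 0 ≠ 0 := fun h => ha (by rw [h, zero_mul])
  obtain ⟨cu, hcuU, gs, hirr, hdegpos, hfeq⟩ := glue f n hdeg hn0 hprim hcn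
  have hcount1 := part1 f n hdeg ha hprim m hm r hr p k j hp hk hpdist hsn hj hcond1 hcond2
    cu hcuU gs hirr hfeq
  have hcard := part2 f n hdeg hn0 hcn hc0 m hm hmh r hr p k hp hsn q hq hqmin hcond3
    cu hcuU gs hirr hdegpos hfeq hcount1
  exact packify f r hr n hdeg hn0 cu hcuU gs hirr hdegpos hfeq hcard
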